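/- Assume in addition that g is locally Hölder continuous of some order β ∈ (0, H). Then for every t > 0, the Lebesgue integral ∫₀^t s^{2H−1} / X_s ds is finite and strictly positive; moreover a ∫₀^t s^{2H−1}/X_s ds ≤ X_t − X₀ + b∫₀^t X_s ds − σ g(t). -/

import Mathlib

open MeasureTheory Filter Set

/-- `X` is a continuous solution on `[0,T]` of the ε-approximating equation
`X_t = X₀ + a ∫₀ᵗ (s+ε)^{2H-1} / (X_s 1_{X_s>0} + ε) ds − b ∫₀ᵗ X_s ds + σ g(t)`. -/
def approxSol (X₀ a b σ H : ℝ) (g : ℝ → ℝ) (T ε : ℝ) (X : ℝ → ℝ) : Prop :=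
  ContinuousOn X (Set.Icc 0 T) ∧
    ∀ t ∈ Set.Icc (0:ℝ) T,
      X t = X₀ + a * (∫ s in (0:ℝ)..t,
            (s + ε) ^ (2 * H - 1) / ((if 0 < X s then X s else 0) + ε))
          - b * (∫ s in (0:ℝ)..t, X s) + σ * g t

section Aux

variable {X₀ a b σ H : ℝ} {g : ℝ → ℝ} {Xe : ℝ → ℝ → ℝ}

private lemma if_eq_max (x : ℝ) : (if 0 < x then x else 0) = max x 0 := by
  split_ifs with h
  · exact (max_eq_left h.le).symm
  · exact (max_eq_right (not_lt.1 h)).symm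

/-- The integrand of the approximating equation. -/
private noncomputable def phi (H ε : ℝ) (Y : ℝ → ℝ) (s : ℝ) : ℝ :=
  (s + ε) ^ (2 * H - 1) / (max (Y s) 0 + ε)

private lemma phi_cont {T ε : ℝ} {Y : ℝ → ℝ} (hε : 0 < ε)
    (hY : ContinuousOn Y (Icc 0 T)) :
    ContinuousOn (phi H ε Y) (Icc 0 T) := by
  apply ContinuousOn.div
  · apply ContinuousOn.rpow_const ((continuous_id.add continuous_const).continuousOn)
    intro x hx
    exact Or.inl (by intro h; simp only [Pi.add_apply, id_eq] at h; nlinarith [hx.1])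
  · have : ContinuousOn (fun x => max (Y x) 0) (Icc 0 T) := by
      exact (continuous_id.max continuous_const).comp_continuousOn hY
    exact this.add continuousOn_const
  · intro x hx
    have := le_max_right (Y x) (0:ℝ)
    intro h; nlinarith

private lemma eqn (hXe : ∀ ε > (0:ℝ), ∀ T > (0:ℝ), approxSol X₀ a b σ H g T ε (Xe ε))
    {ε T : ℝ} (hε : 0 < ε) (hT : 0 < T) {s : ℝ} (hs : s ∈ Icc (0:ℝ) T) :
    Xe ε s = X₀ + a * (∫ u in (0:ℝ)..s, phi H ε (Xe ε) u)
      - b * (∫ u in (0:ℝ)..s, Xe ε u) + σ * g s := by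
  have h := (hXe ε hε T hT).2 s hs
  simpa only [phi, if_eq_max] using h

private lemma Xe_zero (hXe : ∀ ε > (0:ℝ), ∀ T > (0:ℝ), approxSol X₀ a b σ H g T ε (Xe ε))
    (hg0 : g 0 = 0) {ε : ℝ} (hε : 0 < ε) : Xe ε 0 = X₀ := by
  have := eqn hXe hε one_pos (s := 0) ⟨le_rfl, zero_le_one⟩
  simpa [hg0] using this

private lemma incr (hXe : ∀ ε > (0:ℝ), ∀ T > (0:ℝ), approxSol X₀ a b σ H g T ε (Xe ε))
    {ε T : ℝ} (hε : 0 < ε) (hT : 0 < T) {r s : ℝ}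
    (hr : r ∈ Icc (0:ℝ) T) (hs : s ∈ Icc (0:ℝ) T) :
    Xe ε s - Xe ε r = a * (∫ u in r..s, phi H ε (Xe ε) u)
      - b * (∫ u in r..s, Xe ε u) + σ * (g s - g r) := by
  have hc := (hXe ε hε T hT).1
  have hφ : ContinuousOn (phi H ε (Xe ε)) (Icc 0 T) := phi_cont hε hc
  have iφ : ∀ x ∈ Icc (0:ℝ) T, IntervalIntegrable (phi H ε (Xe ε)) volume 0 x := by
    intro x hx
    exact (hφ.mono (by rw [uIcc_of_le hx.1]; exact Icc_subset_Icc le_rfl hx.2)).intervalIntegrable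
  have iX : ∀ x ∈ Icc (0:ℝ) T, IntervalIntegrable (Xe ε) volume 0 x := by
    intro x hx
    exact (hc.mono (by rw [uIcc_of_le hx.1]; exact Icc_subset_Icc le_rfl hx.2)).intervalIntegrable
  have h1 := eqn hXe hε hT hs
  have h2 := eqn hXe hε hT hr
  have hsub1 : (∫ u in (0:ℝ)..s, phi H ε (Xe ε) u) - (∫ u in (0:ℝ)..r, phi H ε (Xe ε) u)
      = ∫ u in r..s, phi H ε (Xe ε) u :=
    intervalIntegral.integral_interval_sub_left (iφ s hs) (iφ r hr)
  have hsub2 : (∫ u in (0:ℝ)..s, Xe ε u) - (∫ u in (0:ℝ)..r, Xe ε u)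
      = ∫ u in r..s, Xe ε u :=
    intervalIntegral.integral_interval_sub_left (iX s hs) (iX r hr)
  rw [← hsub1, ← hsub2, h1, h2]; ring

private lemma comparison
    (hXe : ∀ ε > (0:ℝ), ∀ T > (0:ℝ), approxSol X₀ a b σ H g T ε (Xe ε))
    (hg0 : g 0 = 0) (ha : 0 < a) (hb : 0 ≤ b) (hH : H < 1/2)
    {ε₁ ε₂ : ℝ} (h1 : 0 < ε₁) (h12 : ε₁ ≤ ε₂) {T : ℝ} (hT : 0 < T) :
    ∀ s ∈ Icc (0:ℝ) T, Xe ε₂ s ≤ Xe ε₁ s := by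
  by_contra hcon
  push_neg at hcon
  obtain ⟨s₀, hs₀, hlt⟩ := hcon
  have h2 : 0 < ε₂ := lt_of_lt_of_le h1 h12
  have hc2 : ContinuousOn (Xe ε₂) (Icc 0 T) := (hXe ε₂ h2 T hT).1
  have hc1 : ContinuousOn (Xe ε₁) (Icc 0 T) := (hXe ε₁ h1 T hT).1
  have hcD : ContinuousOn (fun u => Xe ε₂ u - Xe ε₁ u) (Icc 0 T) := hc2.sub hc1
  have hD0 : Xe ε₂ 0 - Xe ε₁ 0 = 0 := by
    rw [Xe_zero hXe hg0 h2, Xe_zero hXe hg0 h1, sub_self]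
  set S : Set ℝ := Icc 0 s₀ ∩ (fun u => Xe ε₂ u - Xe ε₁ u) ⁻¹' (Iic 0) with hS
  have hSc : IsClosed S :=
    (hcD.mono (Icc_subset_Icc le_rfl hs₀.2)).preimage_isClosed_of_isClosed
      isClosed_Icc isClosed_Iic
  have h0S : (0:ℝ) ∈ S := ⟨⟨le_rfl, hs₀.1⟩, by simp [hD0]⟩
  have hSb : BddAbove S := BddAbove.mono inter_subset_left bddAbove_Icc
  set r := sSup S with hrdef
  have hrS : r ∈ S := hSc.csSup_mem ⟨0, h0S⟩ hSb
  have hr0 : 0 ≤ r := hrS.1.1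
  have hrs : r ≤ s₀ := hrS.1.2
  have hDr : Xe ε₂ r - Xe ε₁ r ≤ 0 := hrS.2
  have hrT : r ∈ Icc (0:ℝ) T := ⟨hr0, le_trans hrs hs₀.2⟩
  have hposD : ∀ u ∈ Ioc r s₀, 0 < Xe ε₂ u - Xe ε₁ u := by
    intro u hu
    by_contra hcc; push_neg at hcc
    exact absurd (le_csSup hSb ⟨⟨le_trans hr0 hu.1.le, hu.2⟩, hcc⟩) (not_le.2 hu.1)
  have A2 := incr hXe h2 hT hrT hs₀
  have A1 := incr hXe h1 hT hrT hs₀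
  have hsubI : uIcc r s₀ ⊆ Icc (0:ℝ) T := by
    rw [uIcc_of_le hrs]; exact Icc_subset_Icc hr0 hs₀.2
  have iφ₂ : IntervalIntegrable (phi H ε₂ (Xe ε₂)) volume r s₀ :=
    ((phi_cont h2 hc2).mono hsubI).intervalIntegrable
  have iφ₁ : IntervalIntegrable (phi H ε₁ (Xe ε₁)) volume r s₀ :=
    ((phi_cont h1 hc1).mono hsubI).intervalIntegrable
  have iX₂ : IntervalIntegrable (Xe ε₂) volume r s₀ := (hc2.mono hsubI).intervalIntegrable
  have iX₁ : IntervalIntegrable (Xe ε₁) volume r s₀ := (hc1.mono hsubI).intervalIntegrable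
  have hint : (∫ u in r..s₀, (a * phi H ε₂ (Xe ε₂) u - a * phi H ε₁ (Xe ε₁) u
        - b * Xe ε₂ u + b * Xe ε₁ u))
      = a * (∫ u in r..s₀, phi H ε₂ (Xe ε₂) u) - a * (∫ u in r..s₀, phi H ε₁ (Xe ε₁) u)
        - b * (∫ u in r..s₀, Xe ε₂ u) + b * (∫ u in r..s₀, Xe ε₁ u) := by
    rw [intervalIntegral.integral_add
        (((iφ₂.const_mul a).sub (iφ₁.const_mul a)).sub (iX₂.const_mul b)) (iX₁.const_mul b),
      intervalIntegral.integral_sub ((iφ₂.const_mul a).sub (iφ₁.const_mul a)) (iX₂.const_mul b),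
      intervalIntegral.integral_sub (iφ₂.const_mul a) (iφ₁.const_mul a),
      intervalIntegral.integral_const_mul, intervalIntegral.integral_const_mul,
      intervalIntegral.integral_const_mul, intervalIntegral.integral_const_mul]
  have hneg : (∫ u in r..s₀, (a * phi H ε₂ (Xe ε₂) u - a * phi H ε₁ (Xe ε₁) u
        - b * Xe ε₂ u + b * Xe ε₁ u)) ≤ 0 := by
    rw [intervalIntegral.integral_of_le hrs]
    apply setIntegral_nonpos measurableSet_Ioc
    intro u hu
    have hDu := hposD u hu
    have hu0 : 0 < u := lt_of_le_of_lt hr0 hu.1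
    have hφle : phi H ε₂ (Xe ε₂) u ≤ phi H ε₁ (Xe ε₁) u := by
      unfold phi
      apply div_le_div₀ (Real.rpow_nonneg (by linarith) _)
        (Real.rpow_le_rpow_of_nonpos (by linarith) (by linarith) (by linarith))
        (by have := le_max_right (Xe ε₁ u) (0:ℝ); linarith)
        (add_le_add (max_le_max (by linarith) le_rfl) h12)
    have hm1 : a * phi H ε₂ (Xe ε₂) u ≤ a * phi H ε₁ (Xe ε₁) u :=
      mul_le_mul_of_nonneg_left hφle ha.le
    have hm2 : 0 ≤ b * (Xe ε₂ u - Xe ε₁ u) := mul_nonneg hb hDu.le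
    nlinarith
  rw [hint] at hneg
  linarith [A2, A1, hDr, hlt, hneg]

private lemma Xe_le_X {X : ℝ → ℝ}
    (hXe : ∀ ε > (0:ℝ), ∀ T > (0:ℝ), approxSol X₀ a b σ H g T ε (Xe ε))
    (hX : ∀ t ≥ (0:ℝ), Tendsto (fun ε => Xe ε t) (nhdsWithin 0 (Set.Ioi 0)) (nhds (X t)))
    (hg0 : g 0 = 0) (ha : 0 < a) (hb : 0 ≤ b) (hH : H < 1/2)
    {ε s : ℝ} (hε : 0 < ε) (hs : 0 ≤ s) : Xe ε s ≤ X s := by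
  have hev : ∀ᶠ ε' in nhdsWithin (0:ℝ) (Set.Ioi 0), Xe ε s ≤ Xe ε' s := by
    filter_upwards [Ioo_mem_nhdsGT_of_mem (Set.mem_Ico.2 ⟨le_rfl, hε⟩)] with ε' hε'
    exact comparison hXe hg0 ha hb hH hε'.1 hε'.2.le (show (0:ℝ) < s + 1 by linarith)
      s ⟨hs, by linarith⟩
  exact ge_of_tendsto (hX s hs) hev

private lemma upper_bound
    (hX₀ : 0 < X₀) (ha : 0 < a) (hb : 0 ≤ b) (hσ : 0 < σ) (hH0 : 0 < H)
    (hXe : ∀ ε > (0:ℝ), ∀ T > (0:ℝ), approxSol X₀ a b σ H g T ε (Xe ε))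
    (hg0 : g 0 = 0)
    {t : ℝ} (ht : 0 < t) {G : ℝ} (hG : ∀ x ∈ Icc (0:ℝ) t, |g x| ≤ G)
    {ε : ℝ} (hε : 0 < ε) (hε1 : ε ≤ 1) {s : ℝ} (hs : s ∈ Icc (0:ℝ) t) :
    Xe ε s ≤ X₀ + a * ((t+1) ^ (2*H) / (2*H) / X₀) + 2*σ*G := by
  have hG0 : 0 ≤ G := le_trans (abs_nonneg _) (hG 0 ⟨le_rfl, ht.le⟩)
  have ht1 : (0:ℝ) ≤ (t+1) ^ (2*H) := Real.rpow_nonneg (by linarith) _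
  have hMX₀ : X₀ ≤ X₀ + a * ((t+1) ^ (2*H) / (2*H) / X₀) + 2*σ*G := by
    have h3 : 0 ≤ a * ((t+1) ^ (2*H) / (2*H) / X₀) := by positivity
    nlinarith [hσ.le]
  rcases le_or_gt (Xe ε s) X₀ with hle | hgt
  · linarith
  have hcont : ContinuousOn (Xe ε) (Icc 0 t) := (hXe ε hε t ht).1
  set S : Set ℝ := Icc 0 s ∩ (Xe ε) ⁻¹' (Iic X₀) with hSdef
  have hSc : IsClosed S :=
    (hcont.mono (Icc_subset_Icc le_rfl hs.2)).preimage_isClosed_of_isClosed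
      isClosed_Icc isClosed_Iic
  have h0S : (0:ℝ) ∈ S := ⟨⟨le_rfl, hs.1⟩, by
    simp [Set.mem_preimage, Xe_zero hXe hg0 hε]⟩
  have hSb : BddAbove S := BddAbove.mono inter_subset_left bddAbove_Icc
  set r := sSup S with hrdef
  have hrS : r ∈ S := hSc.csSup_mem ⟨0, h0S⟩ hSb
  have hr0 : 0 ≤ r := hrS.1.1
  have hrs : r ≤ s := hrS.1.2
  have hXer : Xe ε r ≤ X₀ := hrS.2
  have hmid : ∀ u ∈ Ioc r s, X₀ < Xe ε u := by
    intro u hu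
    by_contra hcc; push_neg at hcc
    exact absurd (le_csSup hSb ⟨⟨le_trans hr0 hu.1.le, hu.2⟩, hcc⟩) (not_le.2 hu.1)
  have hrt : r ∈ Icc (0:ℝ) t := ⟨hr0, le_trans hrs hs.2⟩
  have hinc := incr hXe hε ht hrt hs
  have hsubI : uIcc r s ⊆ Icc (0:ℝ) t := by
    rw [uIcc_of_le hrs]; exact Icc_subset_Icc hr0 hs.2
  have hφint : IntervalIntegrable (phi H ε (Xe ε)) volume r s :=
    ((phi_cont hε hcont).mono hsubI).intervalIntegrable
  have hψc : ContinuousOn (fun u : ℝ => (u+ε) ^ (2*H-1)) (Icc 0 t) := by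
    apply ContinuousOn.rpow_const ((continuous_id.add continuous_const).continuousOn)
    intro x hx
    exact Or.inl (by intro hcc; simp only [Pi.add_apply, id_eq] at hcc; nlinarith [hx.1])
  have hψc' : ContinuousOn (fun u : ℝ => (u+ε) ^ (2*H-1) / X₀) (Icc 0 t) :=
    hψc.div_const _
  have key : (∫ u in r..s, phi H ε (Xe ε) u) ≤ (t+1) ^ (2*H) / (2*H) / X₀ := by
    have hb1 : (∫ u in r..s, phi H ε (Xe ε) u)
        ≤ ∫ u in Ioc r s, (u+ε) ^ (2*H-1) / X₀ := by
      rw [intervalIntegral.integral_of_le hrs]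
      apply setIntegral_mono_on
        (hφint.1.mono_set subset_rfl)
        ((hψc'.integrableOn_Icc).mono_set
          (subset_trans Ioc_subset_Icc_self (Icc_subset_Icc hr0 hs.2)))
        measurableSet_Ioc
      intro u hu
      unfold phi
      apply div_le_div_of_nonneg_left (Real.rpow_nonneg (by nlinarith [hr0, hu.1]) _) hX₀
      have := le_max_left (Xe ε u) (0:ℝ)
      linarith [hmid u hu]
    have hb2 : (∫ u in Ioc r s, (u+ε) ^ (2*H-1) / X₀)
        ≤ ∫ u in Ioc 0 t, (u+ε) ^ (2*H-1) / X₀ := by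
      apply setIntegral_mono_set (hψc'.integrableOn_Icc.mono_set Ioc_subset_Icc_self)
      · filter_upwards [ae_restrict_mem measurableSet_Ioc] with u hu
        have : (0:ℝ) < u + ε := by nlinarith [hu.1]
        positivity
      · exact (Ioc_subset_Ioc hr0 hs.2).eventuallyLE
    have hcomp : (∫ u in Ioc 0 t, (u+ε) ^ (2*H-1))
        = ((t+ε) ^ (2*H) - ε ^ (2*H)) / (2*H) := by
      rw [← intervalIntegral.integral_of_le ht.le]
      rw [intervalIntegral.integral_comp_add_right (fun u => u ^ (2*H-1)) ε]
      rw [integral_rpow (Or.inr ⟨by intro hcc; nlinarith, by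
        rw [Set.uIcc_of_le (by linarith)]
        intro hcc
        exact absurd hcc.1 (by linarith)⟩)]
      have h21 : 2*H - 1 + 1 = 2*H := by ring
      rw [h21, zero_add]
    have hdivc : (∫ u in Ioc 0 t, (u+ε) ^ (2*H-1) / X₀)
        = ((t+ε) ^ (2*H) - ε ^ (2*H)) / (2*H) / X₀ := by
      rw [integral_div, hcomp]
    have hfin : ((t+ε) ^ (2*H) - ε ^ (2*H)) / (2*H) / X₀ ≤ (t+1) ^ (2*H) / (2*H) / X₀ := by
      have h9 : (t+ε) ^ (2*H) - ε ^ (2*H) ≤ (t+1) ^ (2*H) := by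
        have := Real.rpow_le_rpow (by linarith : (0:ℝ) ≤ t + ε)
          (by linarith : t + ε ≤ t + 1) (by linarith : (0:ℝ) ≤ 2*H)
        have := Real.rpow_nonneg hε.le (2*H)
        linarith
      gcongr
    linarith [hb1, hb2, hdivc ▸ hb2, hfin]
  have hJnn : 0 ≤ ∫ u in r..s, Xe ε u := by
    rw [intervalIntegral.integral_of_le hrs]
    apply setIntegral_nonneg measurableSet_Ioc
    intro u hu; linarith [hmid u hu]
  have hgs := abs_le.1 (hG s hs)
  have hgr := abs_le.1 (hG r hrt)
  have haφ : a * (∫ u in r..s, phi H ε (Xe ε) u) ≤ a * ((t+1) ^ (2*H) / (2*H) / X₀) :=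
    mul_le_mul_of_nonneg_left key ha.le
  have hbJ : 0 ≤ b * ∫ u in r..s, Xe ε u := mul_nonneg hb hJnn
  have hgdiff : σ * (g s - g r) ≤ σ * (2*G) :=
    mul_le_mul_of_nonneg_left (by linarith [hgs.1, hgs.2, hgr.1, hgr.2]) hσ.le
  have hring : σ * (2*G) = 2*σ*G := by ring
  linarith [hinc, hXer, haφ, hbJ, hgdiff]

end Aux

/-- **Corollary 3.3.** For every `t > 0` the Lebesgue integral
`∫₀ᵗ s^{2H-1}/X_s ds` is finite and strictly positive, and
`a ∫₀ᵗ s^{2H-1}/X_s ds ≤ X_t − X₀ + b ∫₀ᵗ X_s ds − σ g(t)`. -/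
theorem singular_integral_finite_positive
    (X₀ a b σ H : ℝ) (hX₀ : 0 < X₀) (ha : 0 < a) (hb : 0 ≤ b) (hσ : 0 < σ)
    (hH0 : 0 < H) (hH : H < 1/2)
    (g : ℝ → ℝ) (hgc : ContinuousOn g (Set.Ici 0)) (hg0 : g 0 = 0)
    (Xe : ℝ → ℝ → ℝ)
    (hXe : ∀ ε > (0:ℝ), ∀ T > (0:ℝ), approxSol X₀ a b σ H g T ε (Xe ε))
    (X : ℝ → ℝ)
    (hX : ∀ t ≥ (0:ℝ),
      Tendsto (fun ε => Xe ε t) (nhdsWithin 0 (Set.Ioi 0)) (nhds (X t)))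
    (β : ℝ) (hβ0 : 0 < β) (hβH : β < H)
    (hgH : ∀ T > (0:ℝ), ∃ C > (0:ℝ), ∀ s ∈ Set.Icc (0:ℝ) T, ∀ t ∈ Set.Icc (0:ℝ) T,
      |g t - g s| ≤ C * |t - s| ^ β)
    :
    ∀ t > (0:ℝ),
      IntegrableOn (fun s => s ^ (2 * H - 1) / X s) (Set.Ioc 0 t) ∧
      0 < (∫ s in (0:ℝ)..t, s ^ (2 * H - 1) / X s) ∧
      a * (∫ s in (0:ℝ)..t, s ^ (2 * H - 1) / X s)
        ≤ X t - X₀ + b * (∫ s in (0:ℝ)..t, X s) - σ * g t := by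
  intro t ht
  have hIoc : MeasurableSet (Ioc (0:ℝ) t) := measurableSet_Ioc
  -- the approximating sequence of epsilons
  set w : ℕ → ℝ := fun n => 1 / ((n:ℝ) + 1) with hwdef
  have hw0 : ∀ n, 0 < w n := fun n => by positivity
  have hw1 : ∀ n, w n ≤ 1 := fun n => by
    rw [hwdef]
    rw [div_le_one (by positivity)]
    have : (0:ℝ) ≤ (n:ℝ) := Nat.cast_nonneg n
    linarith
  have hwtend : Tendsto w atTop (nhds (0:ℝ)) := by
    simpa [hwdef] using tendsto_one_div_add_atTop_nhds_zero_nat (𝕜 := ℝ)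
  have hwlim : Tendsto w atTop (nhdsWithin (0:ℝ) (Set.Ioi 0)) :=
    tendsto_nhdsWithin_of_tendsto_nhds_of_eventually_within w hwtend
      (Eventually.of_forall fun n => hw0 n)
  have hseq : ∀ s, 0 ≤ s → Tendsto (fun n => Xe (w n) s) atTop (nhds (X s)) :=
    fun s hs => (hX s hs).comp hwlim
  -- continuity facts
  have hXec : ∀ ε, 0 < ε → ContinuousOn (Xe ε) (Icc 0 t) := fun ε hε => (hXe ε hε t ht).1
  have hφc : ∀ n, ContinuousOn (phi H (w n) (Xe (w n))) (Icc 0 t) :=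
    fun n => phi_cont (hw0 n) (hXec _ (hw0 n))
  -- bound on g
  obtain ⟨G, hG⟩ := isCompact_Icc.exists_bound_of_continuousOn
    (hgc.mono (fun x (hx : x ∈ Icc (0:ℝ) t) => hx.1))
  have hG' : ∀ x ∈ Icc (0:ℝ) t, |g x| ≤ G := fun x hx => hG x hx
  -- uniform bounds
  obtain ⟨C₁, hC₁⟩ := isCompact_Icc.exists_bound_of_continuousOn (hXec 1 one_pos)
  set B : ℝ := max (X₀ + a * ((t+1) ^ (2*H) / (2*H) / X₀) + 2*σ*G) C₁ with hBdef
  have hB : ∀ n, ∀ s ∈ Icc (0:ℝ) t, |Xe (w n) s| ≤ B := by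
    intro n s hs
    rw [abs_le]
    constructor
    · have h1 : Xe 1 s ≤ Xe (w n) s :=
        comparison hXe hg0 ha hb hH (hw0 n) (hw1 n) ht s hs
      have h2 := (abs_le.1 (hC₁ s hs)).1
      have hCB : C₁ ≤ B := le_max_right _ _
      linarith
    · exact le_trans (upper_bound hX₀ ha hb hσ hH0 hXe hg0 ht hG' (hw0 n) (hw1 n) hs)
        (le_max_left _ _)
  have hXB : ∀ s ∈ Icc (0:ℝ) t, |X s| ≤ B := by
    intro s hs
    exact le_of_tendsto (hseq s hs.1).abs (Eventually.of_forall fun n => hB n s hs)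
  -- the equation at time t
  have heqn : ∀ n, a * (∫ s in Ioc (0:ℝ) t, phi H (w n) (Xe (w n)) s)
      = Xe (w n) t - X₀ + b * (∫ s in Ioc (0:ℝ) t, Xe (w n) s) - σ * g t := by
    intro n
    have h1 := eqn hXe (hw0 n) ht (s := t) ⟨ht.le, le_rfl⟩
    rw [intervalIntegral.integral_of_le ht.le, intervalIntegral.integral_of_le ht.le] at h1
    linarith
  -- convergence of the linear term
  have hXe_meas : ∀ n, AEStronglyMeasurable (Xe (w n)) (volume.restrict (Ioc 0 t)) := fun n =>
    ((hXec _ (hw0 n)).aestronglyMeasurable measurableSet_Icc).mono_measure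
      (Measure.restrict_mono Ioc_subset_Icc_self le_rfl)
  have hJtend : Tendsto (fun n => ∫ s in Ioc (0:ℝ) t, Xe (w n) s) atTop
      (nhds (∫ s in Ioc (0:ℝ) t, X s)) := by
    apply tendsto_integral_of_dominated_convergence (fun _ => B) hXe_meas
    · exact integrableOn_const measure_Ioc_lt_top.ne
    · intro n
      filter_upwards [ae_restrict_mem hIoc] with s hs
      simpa [Real.norm_eq_abs] using hB n s ⟨hs.1.le, hs.2⟩
    · filter_upwards [ae_restrict_mem hIoc] with s hs
      exact hseq s hs.1.le
  have hXt : Tendsto (fun n => Xe (w n) t) atTop (nhds (X t)) := hseq t ht.le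
  have hRtend : Tendsto (fun n => a * (∫ s in Ioc (0:ℝ) t, phi H (w n) (Xe (w n)) s))
      atTop (nhds (X t - X₀ + b * (∫ s in Ioc (0:ℝ) t, X s) - σ * g t)) := by
    have h1 : Tendsto
        (fun n => Xe (w n) t - X₀ + b * (∫ s in Ioc (0:ℝ) t, Xe (w n) s) - σ * g t)
        atTop (nhds (X t - X₀ + b * (∫ s in Ioc (0:ℝ) t, X s) - σ * g t)) :=
      ((hXt.sub_const X₀).add (hJtend.const_mul b)).sub_const (σ * g t)
    exact h1.congr fun n => (heqn n).symm
  set R : ℝ := X t - X₀ + b * (∫ s in Ioc (0:ℝ) t, X s) - σ * g t with hRdef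
  have hIn_tend : Tendsto (fun n => ∫ s in Ioc (0:ℝ) t, phi H (w n) (Xe (w n)) s)
      atTop (nhds (a⁻¹ * R)) := by
    have h2 := hRtend.const_mul a⁻¹
    apply h2.congr
    intro n
    rw [← mul_assoc, inv_mul_cancel₀ ha.ne', one_mul]
  have hIn0 : ∀ n, 0 ≤ ∫ s in Ioc (0:ℝ) t, phi H (w n) (Xe (w n)) s := by
    intro n
    apply setIntegral_nonneg hIoc
    intro s hs
    unfold phi
    apply div_nonneg (Real.rpow_nonneg (by nlinarith [hs.1, hw0 n]) _)
    have := le_max_right (Xe (w n) s) (0:ℝ)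
    linarith [hw0 n]
  have hR0 : 0 ≤ a⁻¹ * R := ge_of_tendsto' hIn_tend hIn0
  -- lintegral side
  have hfn_int : ∀ n, IntegrableOn (phi H (w n) (Xe (w n))) (Ioc 0 t) := fun n =>
    ((hφc n).integrableOn_Icc).mono_set Ioc_subset_Icc_self
  have hfn_nn : ∀ n, 0 ≤ᵐ[volume.restrict (Ioc (0:ℝ) t)] (phi H (w n) (Xe (w n))) := by
    intro n
    filter_upwards [ae_restrict_mem hIoc] with s hs
    unfold phi
    apply div_nonneg (Real.rpow_nonneg (by nlinarith [hs.1, hw0 n]) _)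
    have := le_max_right (Xe (w n) s) (0:ℝ)
    linarith [hw0 n]
  have hlin : ∀ n, (∫⁻ s in Ioc (0:ℝ) t, ENNReal.ofReal (phi H (w n) (Xe (w n)) s))
      = ENNReal.ofReal (∫ s in Ioc (0:ℝ) t, phi H (w n) (Xe (w n)) s) := by
    intro n
    rw [← ofReal_integral_eq_lintegral_ofReal (hfn_int n) (hfn_nn n)]
  have hgnmeas : ∀ n, AEMeasurable (fun s => ENNReal.ofReal (phi H (w n) (Xe (w n)) s))
      (volume.restrict (Ioc (0:ℝ) t)) :=
    fun n => ENNReal.measurable_ofReal.comp_aemeasurable (hfn_int n).aemeasurable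
  have hFatou := lintegral_liminf_le' (u := atTop) hgnmeas
  have hlimR : (liminf
      (fun n => ∫⁻ s in Ioc (0:ℝ) t, ENNReal.ofReal (phi H (w n) (Xe (w n)) s)) atTop)
      = ENNReal.ofReal (a⁻¹ * R) := by
    simp only [hlin]
    exact (ENNReal.tendsto_ofReal hIn_tend).liminf_eq
  rw [hlimR] at hFatou
  -- a.e. measurability of the liminf
  have hLmeas : AEMeasurable
      (fun s => liminf (fun n => ENNReal.ofReal (phi H (w n) (Xe (w n)) s)) atTop)
      (volume.restrict (Ioc (0:ℝ) t)) := by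
    refine ⟨fun s => liminf (fun n => (hgnmeas n).mk _ s) atTop,
      Measurable.liminf (fun n => (hgnmeas n).measurable_mk), ?_⟩
    have hae : ∀ᵐ s ∂(volume.restrict (Ioc (0:ℝ) t)), ∀ n,
        ENNReal.ofReal (phi H (w n) (Xe (w n)) s) = (hgnmeas n).mk _ s :=
      ae_all_iff.2 fun n => (hgnmeas n).ae_eq_mk
    filter_upwards [hae] with s hs
    congr 1
    exact funext hs
  have hLlt : ∀ᵐ s ∂(volume.restrict (Ioc (0:ℝ) t)),
      liminf (fun n => ENNReal.ofReal (phi H (w n) (Xe (w n)) s)) atTop < ⊤ :=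
    ae_lt_top' hLmeas (lt_of_le_of_lt hFatou ENNReal.ofReal_lt_top).ne
  -- pointwise identification of the liminf
  have hkey : ∀ᵐ s ∂(volume.restrict (Ioc (0:ℝ) t)), 0 < X s ∧
      liminf (fun n => ENNReal.ofReal (phi H (w n) (Xe (w n)) s)) atTop
        = ENNReal.ofReal (s ^ (2*H-1) / X s) := by
    filter_upwards [ae_restrict_mem hIoc, hLlt] with s hs hLs
    have hs0 : 0 < s := hs.1
    have hnum : Tendsto (fun n => (s + w n) ^ (2*H-1)) atTop (nhds (s ^ (2*H-1))) := by
      have h1 : Tendsto (fun n => s + w n) atTop (nhds (s + 0)) :=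
        tendsto_const_nhds.add hwtend
      rw [add_zero] at h1
      exact ((Real.continuousAt_rpow_const s _ (Or.inl hs0.ne')).tendsto).comp h1
    by_cases hXs : 0 < X s
    · refine ⟨hXs, ?_⟩
      have hden : Tendsto (fun n => max (Xe (w n) s) 0 + w n) atTop (nhds (X s)) := by
        have h2 : Tendsto (fun n => max (Xe (w n) s) 0 + w n) atTop
            (nhds (max (X s) 0 + 0)) := ((hseq s hs0.le).max tendsto_const_nhds).add hwtend
        rwa [max_eq_left hXs.le, add_zero] at h2
      have hdiv : Tendsto (fun n => phi H (w n) (Xe (w n)) s) atTop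
          (nhds (s ^ (2*H-1) / X s)) := hnum.div hden hXs.ne'
      exact (ENNReal.tendsto_ofReal hdiv).liminf_eq
    · exfalso
      push_neg at hXs
      have hXen : ∀ n, Xe (w n) s ≤ 0 := fun n =>
        le_trans (Xe_le_X hXe hX hg0 ha hb hH (hw0 n) hs0.le) hXs
      have hform : ∀ n, phi H (w n) (Xe (w n)) s = (s + w n) ^ (2*H-1) * ((n:ℝ) + 1) := by
        intro n
        simp only [phi, max_eq_right (hXen n), zero_add, hwdef]
        have hXn := hXen n; simp only [hwdef] at hXn; rw [max_eq_right hXn, zero_add, div_eq_mul_inv, one_div, inv_inv]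
      have htop : Tendsto (fun n => phi H (w n) (Xe (w n)) s) atTop atTop := by
        rw [show (fun n => phi H (w n) (Xe (w n)) s)
            = fun n => (s + w n) ^ (2*H-1) * ((n:ℝ) + 1) from funext hform]
        apply Filter.Tendsto.pos_mul_atTop (Real.rpow_pos_of_pos hs0 (2*H-1)) hnum
        exact tendsto_atTop_add_const_right atTop 1 tendsto_natCast_atTop_atTop
      exact hLs.ne (ENNReal.tendsto_ofReal_nhds_top.2 htop).liminf_eq
  -- measurability of X and of the limit integrand
  have hXmeas : AEMeasurable X (volume.restrict (Ioc (0:ℝ) t)) :=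
    aemeasurable_of_tendsto_metrizable_ae atTop (fun n => (hXe_meas n).aemeasurable)
      ((ae_restrict_mem hIoc).mono fun s hs => hseq s hs.1.le)
  have hpowc : ContinuousOn (fun s : ℝ => s ^ (2*H-1)) (Ioc 0 t) := fun x hx =>
    (Real.continuousAt_rpow_const x _ (Or.inl (ne_of_gt hx.1))).continuousWithinAt
  have hhmeas : AEMeasurable (fun s => s ^ (2*H-1) / X s) (volume.restrict (Ioc (0:ℝ) t)) :=
    (hpowc.aemeasurable hIoc).div hXmeas
  -- lintegral bound for the limit integrand
  have hLh : (∫⁻ s in Ioc (0:ℝ) t, ENNReal.ofReal (s ^ (2*H-1) / X s))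
      ≤ ENNReal.ofReal (a⁻¹ * R) := by
    calc (∫⁻ s in Ioc (0:ℝ) t, ENNReal.ofReal (s ^ (2*H-1) / X s))
        = ∫⁻ s in Ioc (0:ℝ) t,
            liminf (fun n => ENNReal.ofReal (phi H (w n) (Xe (w n)) s)) atTop :=
          lintegral_congr_ae (hkey.mono fun s hs => hs.2.symm)
      _ ≤ ENNReal.ofReal (a⁻¹ * R) := hFatou
  -- nonnegativity / positivity of the integrand
  have hh_pos : ∀ᵐ s ∂(volume.restrict (Ioc (0:ℝ) t)), 0 < s ^ (2*H-1) / X s := by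
    filter_upwards [ae_restrict_mem hIoc, hkey] with s hs hk
    exact div_pos (Real.rpow_pos_of_pos hs.1 _) hk.1
  have hh_nn : 0 ≤ᵐ[volume.restrict (Ioc (0:ℝ) t)] (fun s => s ^ (2*H-1) / X s) :=
    hh_pos.mono fun s hs => hs.le
  -- integrability
  have hint : IntegrableOn (fun s => s ^ (2*H-1) / X s) (Ioc 0 t) := by
    refine ⟨hhmeas.aestronglyMeasurable, ?_⟩
    rw [hasFiniteIntegral_iff_ofReal hh_nn]
    exact lt_of_le_of_lt hLh ENNReal.ofReal_lt_top
  have hmain : a * (∫ s in Ioc (0:ℝ) t, s ^ (2*H-1) / X s) ≤ R := by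
    have hval : (∫ s in Ioc (0:ℝ) t, s ^ (2*H-1) / X s)
        = (∫⁻ s in Ioc (0:ℝ) t, ENNReal.ofReal (s ^ (2*H-1) / X s)).toReal := by
      rw [integral_eq_lintegral_of_nonneg_ae hh_nn hhmeas.aestronglyMeasurable]
    have hle : (∫ s in Ioc (0:ℝ) t, s ^ (2*H-1) / X s) ≤ a⁻¹ * R := by
      rw [hval]
      calc (∫⁻ s in Ioc (0:ℝ) t, ENNReal.ofReal (s ^ (2*H-1) / X s)).toReal
          ≤ (ENNReal.ofReal (a⁻¹ * R)).toReal :=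
            ENNReal.toReal_mono ENNReal.ofReal_ne_top hLh
        _ = a⁻¹ * R := ENNReal.toReal_ofReal hR0
    calc a * (∫ s in Ioc (0:ℝ) t, s ^ (2*H-1) / X s) ≤ a * (a⁻¹ * R) :=
          mul_le_mul_of_nonneg_left hle ha.le
      _ = R := by rw [← mul_assoc, mul_inv_cancel₀ ha.ne', one_mul]
  -- positivity of the integral
  have hintervalint : IntervalIntegrable (fun s => s ^ (2*H-1) / X s) volume 0 t := by
    rw [intervalIntegrable_iff, uIoc_of_le ht.le]
    exact hint
  have hpos : 0 < ∫ s in (0:ℝ)..t, s ^ (2*H-1) / X s := by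
    rw [intervalIntegral.integral_pos_iff_support_of_nonneg_ae'
      (by rwa [uIoc_of_le ht.le]) hintervalint]
    refine ⟨ht, ?_⟩
    have hnullset : volume ({s | ¬ 0 < s ^ (2*H-1) / X s} ∩ Ioc (0:ℝ) t) = 0 := by
      have := ae_iff.1 hh_pos
      rwa [Measure.restrict_apply' hIoc] at this
    have hsub : Ioc (0:ℝ) t ⊆
        (Function.support (fun s => s ^ (2*H-1) / X s) ∩ Ioc 0 t)
          ∪ ({s | ¬ 0 < s ^ (2*H-1) / X s} ∩ Ioc (0:ℝ) t) := by
      intro s hs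
      by_cases hps : 0 < s ^ (2*H-1) / X s
      · exact Or.inl ⟨ne_of_gt hps, hs⟩
      · exact Or.inr ⟨hps, hs⟩
    by_contra hcc
    push_neg at hcc
    have h0 : volume (Function.support (fun s => s ^ (2*H-1) / X s) ∩ Ioc (0:ℝ) t) = 0 :=
      le_antisymm hcc zero_le
    have hle := measure_mono (μ := (volume : Measure ℝ)) hsub
    have hIoc_pos : (0:ENNReal) < volume (Ioc (0:ℝ) t) := by
      rw [Real.volume_Ioc]
      exact ENNReal.ofReal_pos.2 (by linarith)
    have := measure_union_le (μ := (volume : Measure ℝ))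
      (Function.support (fun s => s ^ (2*H-1) / X s) ∩ Ioc (0:ℝ) t)
      ({s | ¬ 0 < s ^ (2*H-1) / X s} ∩ Ioc (0:ℝ) t)
    rw [h0, hnullset] at this
    simp only [zero_add, add_zero] at this
    exact absurd (le_trans hle this) (not_le.2 hIoc_pos)
  refine ⟨hint, hpos, ?_⟩
  rw [hRdef] at hmain
  rwa [intervalIntegral.integral_of_le ht.le, intervalIntegral.integral_of_le ht.le]
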